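/- Let n ≥ 1 and let f : {0,1}^n → ℝ ∪ {+∞} be the quadratic function f(x) = Σ_{i∈[n]} h_i x_i + Σ_{1≤i<j≤n} h_{ij} x_i x_j with finite h_i ∈ ℝ and symmetric h_{ij} ∈ ℝ ∪ {+∞}. Suppose h_{ij} ≥ min{h_{ik}, h_{jk}} for all distinct i, j, k and h_{ij} ≥ 0 for all distinct i, j. Then for all distinct i, j, k ∈ [n] and all z ∈ {0,1}^n with supp⁺(z) ⊆ [n] \ {i,j,k}: f(z + χ_i + χ_j) + f(z + χ_k) ≥ min{f(z + χ_j + χ_k) + f(z + χ_i), f(z + χ_i + χ_k) + f(z + χ_j)}; and for all distinct i, j ∈ [n] and all z ∈ {0,1}^n with supp⁺(z) ⊆ [n] \ {i,j}: f(z + χ_i + χ_j) + f(z) ≥ f(z + χ_i) + f(z + χ_j). -/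

import Mathlib

open Finset

def quadF {n : ℕ} (h : Fin n → ℝ) (H : Fin n → Fin n → WithTop ℝ)
    (S : Finset (Fin n)) : WithTop ℝ :=
  (∑ i ∈ S, (h i : WithTop ℝ)) + ∑ p ∈ (S ×ˢ S).filter (fun p => p.1 < p.2), H p.1 p.2

lemma quadF_insert {n : ℕ} (h : Fin n → ℝ) (H : Fin n → Fin n → WithTop ℝ)
    (Hsymm : ∀ i j : Fin n, H i j = H j i) {i : Fin n} {S : Finset (Fin n)} (hi : i ∉ S) :
    quadF h H (insert i S) = quadF h H S + ((h i : WithTop ℝ) + ∑ t ∈ S, H i t) := by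
  have key : ∀ T : Finset (Fin n),
      ∑ p ∈ (T ×ˢ T).filter (fun p => p.1 < p.2), H p.1 p.2
        = ∑ a ∈ T, ∑ b ∈ T, if a < b then H a b else 0 := by
    intro T
    rw [Finset.sum_filter, Finset.sum_product]
  unfold quadF
  rw [Finset.sum_insert hi, key, key, Finset.sum_insert hi]
  have inner : ∀ a, (∑ b ∈ insert i S, if a < b then H a b else 0)
      = (if a < i then H a i else 0) + ∑ b ∈ S, if a < b then H a b else 0 := by
    intro a; rw [Finset.sum_insert hi]
  simp only [inner]
  have : (∑ a ∈ S, ((if a < i then H a i else 0) + ∑ b ∈ S, if a < b then H a b else 0))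
      = (∑ a ∈ S, if a < i then H a i else 0) + ∑ a ∈ S, ∑ b ∈ S, if a < b then H a b else 0 :=
    Finset.sum_add_distrib
  rw [this]
  have comb : ((if i < i then H i i else 0) + ∑ b ∈ S, if i < b then H i b else 0)
      + (∑ a ∈ S, if a < i then H a i else 0) = ∑ t ∈ S, H i t := by
    rw [if_neg (lt_irrefl i), zero_add, ← Finset.sum_add_distrib]
    refine Finset.sum_congr rfl fun t ht => ?_
    have hne : i ≠ t := fun e => hi (e ▸ ht)
    rcases lt_or_gt_of_ne hne with hlt | hgt
    · rw [if_pos hlt, if_neg (not_lt_of_gt hlt), add_zero]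
    · rw [if_neg (not_lt_of_gt hgt), if_pos hgt, zero_add, Hsymm]
  calc (h i : WithTop ℝ) + ∑ a ∈ S, (h a : WithTop ℝ)
        + (((if i < i then H i i else 0) + ∑ b ∈ S, if i < b then H i b else 0)
          + ((∑ a ∈ S, if a < i then H a i else 0) + ∑ a ∈ S, ∑ b ∈ S, if a < b then H a b else 0))
      = (∑ a ∈ S, (h a : WithTop ℝ) + ∑ a ∈ S, ∑ b ∈ S, if a < b then H a b else 0)
        + ((h i : WithTop ℝ) + (((if i < i then H i i else 0) + ∑ b ∈ S, if i < b then H i b else 0)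
          + ∑ a ∈ S, if a < i then H a i else 0)) := by abel
    _ = _ := by rw [comb]

theorem stmt11 (n : ℕ) (hn : 1 ≤ n) (h : Fin n → ℝ) (H : Fin n → Fin n → WithTop ℝ)
    (Hsymm : ∀ i j : Fin n, H i j = H j i)
    (Hanti : ∀ i j k : Fin n, i ≠ j → j ≠ k → i ≠ k → min (H i k) (H j k) ≤ H i j)
    (Hnn : ∀ i j : Fin n, i ≠ j → 0 ≤ H i j) :
    (∀ i j k : Fin n, i ≠ j → j ≠ k → i ≠ k →
      ∀ z : Finset (Fin n), i ∉ z → j ∉ z → k ∉ z →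
        min (quadF h H (insert j (insert k z)) + quadF h H (insert i z))
            (quadF h H (insert i (insert k z)) + quadF h H (insert j z)) ≤
          quadF h H (insert i (insert j z)) + quadF h H (insert k z)) ∧
    (∀ i j : Fin n, i ≠ j → ∀ z : Finset (Fin n), i ∉ z → j ∉ z →
      quadF h H (insert i z) + quadF h H (insert j z) ≤
        quadF h H (insert i (insert j z)) + quadF h H z) := by
  constructor
  · intro i j k hij hjk hik z hiz hjz hkz
    have hjkz : j ∉ insert k z := by simp [hjk, hjz]
    have hikz : i ∉ insert k z := by simp [hik, hiz]
    have hijz : i ∉ insert j z := by simp [hij, hiz]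
    rw [quadF_insert h H Hsymm hjkz, quadF_insert h H Hsymm hikz,
        quadF_insert h H Hsymm hijz, quadF_insert h H Hsymm hkz,
        quadF_insert h H Hsymm hiz, quadF_insert h H Hsymm hjz]
    rw [Finset.sum_insert hkz, Finset.sum_insert hkz, Finset.sum_insert hjz]
    set A := quadF h H z
    set Si := ∑ t ∈ z, H i t
    set Sj := ∑ t ∈ z, H j t
    set Sk := ∑ t ∈ z, H k t
    set C := A + ((h k : WithTop ℝ) + Sk) + ((h j : WithTop ℝ) + Sj)
      + (A + ((h i : WithTop ℝ) + Si)) with hC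
    have e1 : A + ((h k : WithTop ℝ) + Sk) + ((h j : WithTop ℝ) + (H j k + Sj))
        + (A + ((h i : WithTop ℝ) + Si)) = C + H j k := by rw [hC]; abel
    have e2 : A + ((h k : WithTop ℝ) + Sk) + ((h i : WithTop ℝ) + (H i k + Si))
        + (A + ((h j : WithTop ℝ) + Sj)) = C + H i k := by rw [hC]; abel
    have e3 : A + ((h j : WithTop ℝ) + Sj) + ((h i : WithTop ℝ) + (H i j + Si))
        + (A + ((h k : WithTop ℝ) + Sk)) = C + H i j := by rw [hC]; abel
    rw [e1, e2, e3]
    have := Hanti i j k hij hjk hik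
    rcases min_le_iff.mp this with hle | hle
    · exact le_trans (min_le_right _ _) (add_le_add (le_refl C) hle)
    · exact le_trans (min_le_left _ _) (add_le_add (le_refl C) hle)
  · intro i j hij z hiz hjz
    have hijz : i ∉ insert j z := by simp [hij, hiz]
    rw [quadF_insert h H Hsymm hijz, quadF_insert h H Hsymm hjz,
        quadF_insert h H Hsymm hiz, Finset.sum_insert hjz]
    have e : quadF h H z + ((h j : WithTop ℝ) + ∑ t ∈ z, H j t)
        + ((h i : WithTop ℝ) + (H i j + ∑ t ∈ z, H i t))
        + quadF h H z
        = (quadF h H z + ((h i : WithTop ℝ) + ∑ t ∈ z, H i t)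
          + (quadF h H z + ((h j : WithTop ℝ) + ∑ t ∈ z, H j t)) + H i j) := by abel
    rw [e]
    exact le_add_of_nonneg_right (Hnn i j hij)
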